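/- For any ρ ≥ 0 and any bounded domain Ω ⊂ ℝ², the thermodynamic energy per unit area at unit statistics parameter satisfies e(1, ρ) = |Ω| · liminf_{β→∞} E₀(Ω, β, ρ)/β; that is, the large-volume limit at fixed β is equivalent to the large-β limit at fixed volume. -/

import Mathlib

noncomputable section

open MeasureTheory Filter Topology Pointwise Set Metric

abbrev E2 := EuclideanSpace ℝ (Fin 2)

/-- `x^⊥ = (-x₂, x₁)`. -/
def perp (z : E2) : E2 := WithLp.toLp 2 (fun i => if i = 0 then -(z 1) else z 0)

/-- `∇^⊥ w₀ (z) = z^⊥ / |z|²` where `w₀(z) = log |z|`. -/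
def gradPerpW0 (z : E2) : E2 := (‖z‖ ^ 2)⁻¹ • perp z

/-- The self-consistent vector potential `A[ϱ](x) = ∫ ∇^⊥w₀(x−y) ϱ(y) dy`. -/
def vecA (ϱ : E2 → ℝ) (x : E2) : E2 := ∫ y, ϱ y • gradPerpW0 (x - y)

/-- the `j`-th component of the covariant gradient `(∇ + iβA[ϱ])u` at `x`. -/
def covGrad (β : ℝ) (ϱ : E2 → ℝ) (u : E2 → ℂ) (x : E2) (j : Fin 2) : ℂ :=
  fderiv ℝ u x (EuclideanSpace.single j 1) + (((β * vecA ϱ x j : ℝ)) : ℂ) * Complex.I * u x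

/-- Magnetic kinetic energy `∫_Ω |(-i∇ + βA[ϱ])u|²` with a prescribed density `ϱ`. -/
def magKinetic (Ω : Set E2) (β : ℝ) (ϱ : E2 → ℝ) (u : E2 → ℂ) : ℝ :=
  ∫ x in Ω, ∑ j : Fin 2, ‖covGrad β ϱ u x j‖ ^ 2

/-- `|u|²` extended by zero outside `Ω`. -/
def density (Ω : Set E2) (u : E2 → ℂ) : E2 → ℝ := Ω.indicator fun y => ‖u y‖ ^ 2

/-- The average-field functional `ℰ^{af}_{Ω,β}[u] = ∫_Ω |(-i∇+βA[|u|²1_Ω])u|²`. -/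
def afEnergy (Ω : Set E2) (β : ℝ) (u : E2 → ℂ) : ℝ := magKinetic Ω β (density Ω u) u

/-- Membership in `H¹(Ω)`. -/
def MemH1 (Ω : Set E2) (u : E2 → ℂ) : Prop :=
  AEStronglyMeasurable u (volume.restrict Ω) ∧
  Integrable (fun x => ‖u x‖ ^ 2) (volume.restrict Ω) ∧
  (∀ᵐ x ∂(volume.restrict Ω), DifferentiableAt ℝ u x) ∧
  Integrable (fun x => ‖fderiv ℝ u x‖ ^ 2) (volume.restrict Ω)

/-- Membership in `H¹₀(Ω)`: an `H¹` function on all of `ℝ²` vanishing outside `Ω`. -/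
def MemH10 (Ω : Set E2) (u : E2 → ℂ) : Prop :=
  MemH1 univ u ∧ ∀ x ∉ Ω, u x = 0

/-- mass `∫_Ω |u|²`. -/
def mass (Ω : Set E2) (u : E2 → ℂ) : ℝ := ∫ x in Ω, ‖u x‖ ^ 2

/-- Dirichlet ground-state energy `E₀(Ω,β,M)`. -/
def dirichletE (Ω : Set E2) (β M : ℝ) : ℝ :=
  sInf {e | ∃ u, MemH10 Ω u ∧ mass Ω u = M ∧ e = afEnergy Ω β u}

/-- Neumann ground-state energy `E(Ω,β,M)`. -/
def neumannE (Ω : Set E2) (β M : ℝ) : ℝ :=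
  sInf {e | ∃ u, MemH1 Ω u ∧ mass Ω u = M ∧ e = afEnergy Ω β u}

/-- The open unit square `Q ⊂ ℝ²`. -/
def unitSquare : Set E2 := {x | x 0 ∈ Ioo (0:ℝ) 1 ∧ x 1 ∈ Ioo (0:ℝ) 1}

/-- `Ω` has Lipschitz boundary: near each boundary point, up to a rigid (linear isometric)
change of coordinates, `Ω` is the subgraph of a Lipschitz function. -/
def HasLipschitzBoundary (Ω : Set E2) : Prop :=
  ∀ x ∈ frontier Ω, ∃ ε : ℝ, 0 < ε ∧ ∃ (g : E2 ≃ₗᵢ[ℝ] E2) (f : ℝ → ℝ) (K : NNReal),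
    LipschitzWith K f ∧
    Ω ∩ ball x ε = {y ∈ ball x ε | (g (y - x)) 1 < f ((g (y - x)) 0)}

lemma fderiv_const_mul' (u : E2 → ℂ) {a : ℂ} (ha : a ≠ 0) (x : E2) :
    fderiv ℝ (fun y => a * u y) x = a • fderiv ℝ u x := by
  by_cases h : DifferentiableAt ℝ u x
  · exact fderiv_const_mul h a
  · have h2 : ¬ DifferentiableAt ℝ (fun y => a * u y) x := by
      intro hv
      have := hv.const_mul a⁻¹
      apply h
      have heq : (fun y => a⁻¹ * (a * u y)) = u := by
        funext y; rw [← mul_assoc, inv_mul_cancel₀ ha, one_mul]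
      rwa [heq] at this
    rw [fderiv_zero_of_not_differentiableAt h, fderiv_zero_of_not_differentiableAt h2]
    ext v; simp

-- unconditional fderiv of dilation composition

lemma fderiv_comp_smul' (u : E2 → ℂ) {L : ℝ} (hL : L ≠ 0) (x : E2) :
    fderiv ℝ (fun y => u (L⁻¹ • y)) x = L⁻¹ • fderiv ℝ u (L⁻¹ • x) := by
  have hlin : ∀ (c : ℝ), (fun y : E2 => c • y) = ⇑(c • ContinuousLinearMap.id ℝ E2) := by
    intro c; funext y; simp
  by_cases h : DifferentiableAt ℝ u (L⁻¹ • x)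
  · have hdg : DifferentiableAt ℝ (fun y : E2 => L⁻¹ • y) x := by
      rw [hlin]; exact (L⁻¹ • ContinuousLinearMap.id ℝ E2).differentiableAt
    have hcomp := fderiv_comp x h hdg
    have : fderiv ℝ (fun y : E2 => L⁻¹ • y) x = L⁻¹ • ContinuousLinearMap.id ℝ E2 := by
      rw [hlin]; exact ContinuousLinearMap.fderiv _
    rw [show (fun y => u (L⁻¹ • y)) = u ∘ (fun y : E2 => L⁻¹ • y) from rfl, hcomp, this]
    ext v
    simp
  · have h2 : ¬ DifferentiableAt ℝ (fun y => u (L⁻¹ • y)) x := by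
      intro hv
      apply h
      have hdg : DifferentiableAt ℝ (fun y : E2 => L • y) (L⁻¹ • x) := by
        rw [hlin]; exact (L • ContinuousLinearMap.id ℝ E2).differentiableAt
      have hvx : DifferentiableAt ℝ (fun y => u (L⁻¹ • y)) (L • L⁻¹ • x) := by
        rwa [smul_smul, mul_inv_cancel₀ hL, one_smul]
      have := hvx.comp (L⁻¹ • x) hdg
      have heq : ((fun y => u (L⁻¹ • y)) ∘ fun y : E2 => L • y) = u := by
        funext y; simp [Function.comp, smul_smul, inv_mul_cancel₀ hL]
      rwa [heq] at this
    rw [fderiv_zero_of_not_differentiableAt h, fderiv_zero_of_not_differentiableAt h2]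
    ext v; simp

lemma vecA_smul (c : ℝ) (ϱ : E2 → ℝ) (x : E2) :
    vecA (fun y => c * ϱ y) x = c • vecA ϱ x := by
  simp only [vecA, mul_smul, integral_smul]

lemma gradPerpW0_smul {L : ℝ} (hL : 0 < L) (z : E2) :
    gradPerpW0 (L • z) = L⁻¹ • gradPerpW0 z := by
  have hperp : perp (L • z) = L • perp z := by
    ext i
    simp only [perp, PiLp.toLp_apply, PiLp.smul_apply, smul_eq_mul]
    split <;> ring
  have hnorm : ‖L • z‖ ^ 2 = L ^ 2 * ‖z‖ ^ 2 := by
    rw [norm_smul, mul_pow, Real.norm_eq_abs, sq_abs]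
  rw [gradPerpW0, gradPerpW0, hperp, hnorm, smul_smul, smul_smul]
  congr 1
  rcases eq_or_ne (‖z‖^2) 0 with h0 | h0
  · simp [h0]
  · field_simp

lemma vecA_comp_smul (ϱ : E2 → ℝ) {L : ℝ} (hL : 0 < L) (x : E2) :
    vecA (fun y => ϱ (L⁻¹ • y)) x = L • vecA ϱ (L⁻¹ • x) := by
  have h2 : Module.finrank ℝ E2 = 2 := finrank_euclideanSpace_fin
  set F : E2 → E2 := fun y => ϱ (L⁻¹ • y) • gradPerpW0 (x - y) with hF
  have key := MeasureTheory.Measure.integral_comp_inv_smul (volume : Measure E2)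
      (fun z => F (L • z)) L
  have hls : ∀ y : E2, L • L⁻¹ • y = y := fun y => by
    rw [smul_smul, mul_inv_cancel₀ hL.ne', one_smul]
  simp only [hls] at key
  have habs : |L ^ Module.finrank ℝ E2| = L ^ 2 := by
    rw [h2, abs_of_pos (pow_pos hL 2)]
  have hFL : ∀ z : E2, F (L • z) = L⁻¹ • (ϱ z • gradPerpW0 (L⁻¹ • x - z)) := by
    intro z
    have : x - L • z = L • (L⁻¹ • x - z) := by
      rw [smul_sub, hls]
    rw [hF]
    simp only [smul_smul, inv_mul_cancel₀ hL.ne', one_smul, this,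
      gradPerpW0_smul hL, smul_comm]
    rw [mul_comm]
  calc vecA (fun y => ϱ (L⁻¹ • y)) x = ∫ y, F y := rfl
    _ = |L ^ Module.finrank ℝ E2| • ∫ z, F (L • z) := key
    _ = L ^ 2 • (L⁻¹ • ∫ z, ϱ z • gradPerpW0 (L⁻¹ • x - z)) := by
        rw [habs]
        congr 1
        simp only [hFL, integral_smul]
    _ = L • vecA ϱ (L⁻¹ • x) := by
        rw [vecA, smul_smul, sq]
        congr 1
        field_simp

lemma covGrad_const_mul (β c : ℝ) (hc : 0 < c) (ϱ : E2 → ℝ) (u : E2 → ℂ) (x : E2) (j : Fin 2) :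
    covGrad β (fun y => c * ϱ y) (fun y => (Real.sqrt c : ℂ) * u y) x j
      = (Real.sqrt c : ℂ) * covGrad (β * c) ϱ u x j := by
  have hs : (Real.sqrt c : ℂ) ≠ 0 := by
    exact_mod_cast (Real.sqrt_pos.2 hc).ne'
  unfold covGrad
  rw [fderiv_const_mul' u hs, vecA_smul]
  simp only [ContinuousLinearMap.smul_apply, smul_eq_mul, PiLp.smul_apply]
  push_cast
  ring

lemma covGrad_comp_smul (β : ℝ) {L : ℝ} (hL : 0 < L) (ϱ : E2 → ℝ) (u : E2 → ℂ) (x : E2)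
    (j : Fin 2) :
    covGrad β (fun y => ϱ (L⁻¹ • y)) (fun y => u (L⁻¹ • y)) x j
      = (L⁻¹ : ℂ) * covGrad (β * L ^ 2) ϱ u (L⁻¹ • x) j := by
  have hLC : (L : ℂ) ≠ 0 := by exact_mod_cast hL.ne'
  unfold covGrad
  rw [fderiv_comp_smul' u hL.ne' x, vecA_comp_smul ϱ hL x]
  simp only [ContinuousLinearMap.smul_apply, PiLp.smul_apply, smul_eq_mul]
  rw [Complex.real_smul]
  push_cast
  field_simp

lemma setIntegral_scale (f : E2 → ℝ) (Ω : Set E2) {L : ℝ} (hL : 0 < L) :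
    ∫ x in L • Ω, f (L⁻¹ • x) = L ^ 2 * ∫ x in Ω, f x := by
  have h2 : Module.finrank ℝ E2 = 2 := finrank_euclideanSpace_fin
  have key := MeasureTheory.Measure.setIntegral_comp_smul (volume : Measure E2) f (L • Ω)
      (inv_ne_zero hL.ne')
  rw [key, inv_smul_smul₀ hL.ne' Ω, h2, inv_pow, inv_inv, abs_of_pos (pow_pos hL 2),
    smul_eq_mul]

lemma mass_comp_smul (Ω : Set E2) (u : E2 → ℂ) {L : ℝ} (hL : 0 < L) :
    (∫ x in L • Ω, ‖u (L⁻¹ • x)‖ ^ 2) = L ^ 2 * ∫ x in Ω, ‖u x‖ ^ 2 :=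
  setIntegral_scale (fun y => ‖u y‖ ^ 2) Ω hL

lemma density_comp_smul (Ω : Set E2) (u : E2 → ℂ) {L : ℝ} (hL : 0 < L) :
    density (L • Ω) (fun x => u (L⁻¹ • x)) = fun y => density Ω u (L⁻¹ • y) := by
  funext y
  simp only [density, Set.indicator]
  have : y ∈ L • Ω ↔ L⁻¹ • y ∈ Ω := by
    rw [Set.mem_smul_set_iff_inv_smul_mem₀ hL.ne']
  by_cases h : L⁻¹ • y ∈ Ω
  · rw [if_pos (this.2 h), if_pos h]
  · rw [if_neg (fun hh => h (this.1 hh)), if_neg h]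

lemma magKinetic_comp_smul (Ω : Set E2) (β : ℝ) (ϱ : E2 → ℝ) (u : E2 → ℂ) {L : ℝ} (hL : 0 < L) :
    magKinetic (L • Ω) β (fun y => ϱ (L⁻¹ • y)) (fun y => u (L⁻¹ • y))
      = magKinetic Ω (β * L ^ 2) ϱ u := by
  unfold magKinetic
  have hpt : ∀ x : E2, ∑ j : Fin 2, ‖covGrad β (fun y => ϱ (L⁻¹ • y)) (fun y => u (L⁻¹ • y)) x j‖ ^ 2
      = (L⁻¹) ^ 2 * ((fun z => ∑ j : Fin 2, ‖covGrad (β * L ^ 2) ϱ u z j‖ ^ 2) (L⁻¹ • x)) := by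
    intro x
    rw [Finset.mul_sum]
    refine Finset.sum_congr rfl fun j _ => ?_
    rw [covGrad_comp_smul β hL ϱ u x j, norm_mul, mul_pow]
    congr 2
    rw [norm_inv, Complex.norm_real, Real.norm_eq_abs, abs_of_pos hL]
  simp only [hpt]
  rw [integral_const_mul]
  simp only [setIntegral_scale (fun z => ∑ j : Fin 2, ‖covGrad (β * L ^ 2) ϱ u z j‖ ^ 2) Ω hL]
  rw [← mul_assoc]
  rw [inv_pow, inv_mul_cancel₀ (pow_pos hL 2).ne', one_mul]

lemma afEnergy_comp_smul (Ω : Set E2) (β : ℝ) (u : E2 → ℂ) {L : ℝ} (hL : 0 < L) :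
    afEnergy (L • Ω) β (fun x => u (L⁻¹ • x)) = afEnergy Ω (β * L ^ 2) u := by
  unfold afEnergy
  rw [density_comp_smul Ω u hL, magKinetic_comp_smul Ω β (density Ω u) u hL]

lemma norm_sqrt_mul_sq (c : ℝ) (hc : 0 < c) (w : ℂ) :
    ‖(Real.sqrt c : ℂ) * w‖ ^ 2 = c * ‖w‖ ^ 2 := by
  rw [norm_mul, mul_pow, Complex.norm_real, Real.norm_eq_abs,
    abs_of_nonneg (Real.sqrt_nonneg c), Real.sq_sqrt hc.le]

lemma density_const_mul (Ω : Set E2) (u : E2 → ℂ) {c : ℝ} (hc : 0 < c) :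
    density Ω (fun x => (Real.sqrt c : ℂ) * u x) = fun y => c * density Ω u y := by
  funext y
  simp only [density, Set.indicator]
  by_cases h : y ∈ Ω
  · rw [if_pos h, if_pos h, norm_sqrt_mul_sq c hc]
  · rw [if_neg h, if_neg h, mul_zero]

lemma magKinetic_const_mul (Ω : Set E2) (β : ℝ) (ϱ : E2 → ℝ) (u : E2 → ℂ) {c : ℝ} (hc : 0 < c) :
    magKinetic Ω β (fun y => c * ϱ y) (fun y => (Real.sqrt c : ℂ) * u y)
      = c * magKinetic Ω (β * c) ϱ u := by
  unfold magKinetic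
  rw [← integral_const_mul]
  refine integral_congr_ae (Filter.Eventually.of_forall fun x => ?_)
  simp only
  rw [Finset.mul_sum]
  refine Finset.sum_congr rfl fun j _ => ?_
  rw [covGrad_const_mul β c hc ϱ u x j, norm_sqrt_mul_sq c hc]

lemma afEnergy_const_mul (Ω : Set E2) (β : ℝ) (u : E2 → ℂ) {c : ℝ} (hc : 0 < c) :
    afEnergy Ω β (fun x => (Real.sqrt c : ℂ) * u x) = c * afEnergy Ω (β * c) u := by
  unfold afEnergy
  rw [density_const_mul Ω u hc, magKinetic_const_mul Ω β (density Ω u) u hc]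

lemma mass_const_mul (Ω : Set E2) (u : E2 → ℂ) {c : ℝ} (hc : 0 < c) :
    (∫ x in Ω, ‖(Real.sqrt c : ℂ) * u x‖ ^ 2) = c * ∫ x in Ω, ‖u x‖ ^ 2 := by
  rw [← integral_const_mul]
  refine integral_congr_ae (Filter.Eventually.of_forall fun x => ?_)
  simp only
  exact norm_sqrt_mul_sq c hc (u x)

lemma MemH10_const_mul (Ω : Set E2) (u : E2 → ℂ) {c : ℝ} (hc : 0 < c) (hu : MemH10 Ω u) :
    MemH10 Ω (fun x => (Real.sqrt c : ℂ) * u x) := by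
  obtain ⟨⟨hm, hi, hd, hf⟩, hz⟩ := hu
  have hsC : (Real.sqrt c : ℂ) ≠ 0 := by exact_mod_cast (Real.sqrt_pos.2 hc).ne'
  refine ⟨⟨hm.const_mul _, ?_, ?_, ?_⟩, fun x hx => by
    show (Real.sqrt c : ℂ) * u x = 0; rw [hz x hx, mul_zero]⟩
  · have : (fun x => ‖(Real.sqrt c : ℂ) * u x‖ ^ 2) = fun x => c * ‖u x‖ ^ 2 := by
      funext x; exact norm_sqrt_mul_sq c hc (u x)
    rw [this]
    exact hi.const_mul c
  · exact hd.mono fun x hx => hx.const_mul _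
  · have : (fun x => ‖fderiv ℝ (fun y => (Real.sqrt c : ℂ) * u y) x‖ ^ 2)
        = fun x => c * ‖fderiv ℝ u x‖ ^ 2 := by
      funext x
      rw [fderiv_const_mul' u hsC x, norm_smul ((Real.sqrt c : ℂ)) (fderiv ℝ u x), mul_pow,
        Complex.norm_real, Real.norm_eq_abs, abs_of_nonneg (Real.sqrt_nonneg c),
        Real.sq_sqrt hc.le]
    rw [this]
    exact hf.const_mul c

lemma MemH10_comp_smul (Ω : Set E2) (u : E2 → ℂ) {L : ℝ} (hL : 0 < L) (hu : MemH10 Ω u) :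
    MemH10 (L • Ω) (fun x => u (L⁻¹ • x)) := by
  obtain ⟨⟨hm, hi, hd, hf⟩, hz⟩ := hu
  rw [Measure.restrict_univ] at hm hi hd hf
  have hqmp : Measure.QuasiMeasurePreserving (fun x : E2 => L⁻¹ • x) volume volume := by
    simpa using Measure.quasiMeasurePreserving_smul (volume : Measure E2) (inv_ne_zero hL.ne')
  constructor
  · refine ⟨?_, ?_, ?_, ?_⟩ <;> rw [Measure.restrict_univ]
    · exact hm.comp_quasiMeasurePreserving hqmp
    · exact hi.comp_smul (inv_ne_zero hL.ne')
    · have := hqmp.ae hd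
      refine this.mono fun x hx => ?_
      have hlin : (fun y : E2 => L⁻¹ • y) = ⇑(L⁻¹ • ContinuousLinearMap.id ℝ E2) := by
        funext y; simp
      have hgd : DifferentiableAt ℝ (fun y : E2 => L⁻¹ • y) x := by
        rw [hlin]; exact (L⁻¹ • ContinuousLinearMap.id ℝ E2).differentiableAt
      have : DifferentiableAt ℝ (u ∘ fun y : E2 => L⁻¹ • y) x := by
        refine DifferentiableAt.comp x ?_ hgd
        exact hx
      exact this
    · have heq : (fun x => ‖fderiv ℝ (fun y => u (L⁻¹ • y)) x‖ ^ 2)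
          = fun x => (L⁻¹) ^ 2 * ((fun y => ‖fderiv ℝ u y‖ ^ 2) (L⁻¹ • x)) := by
        funext x
        simp only
        rw [fderiv_comp_smul' u hL.ne' x, norm_smul (L⁻¹) (fderiv ℝ u (L⁻¹ • x)), mul_pow,
          Real.norm_eq_abs, sq_abs]
      rw [heq]
      exact (hf.comp_smul (inv_ne_zero hL.ne')).const_mul _
  · intro x hx
    have hno : L⁻¹ • x ∉ Ω := by
      intro h
      refine hx ⟨L⁻¹ • x, h, ?_⟩
      show L • L⁻¹ • x = x
      rw [smul_smul, mul_inv_cancel₀ hL.ne', one_smul]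
    show u (L⁻¹ • x) = 0
    exact hz _ hno

lemma dirichletE_mass_scale (Ω : Set E2) (β M : ℝ) {c : ℝ} (hc : 0 < c) :
    dirichletE Ω β (c * M) = c * dirichletE Ω (β * c) M := by
  have hset : {e | ∃ u, MemH10 Ω u ∧ mass Ω u = c * M ∧ e = afEnergy Ω β u}
      = c • {e | ∃ u, MemH10 Ω u ∧ mass Ω u = M ∧ e = afEnergy Ω (β * c) u} := by
    ext e
    constructor
    · rintro ⟨v, hv, hm, rfl⟩
      refine ⟨c⁻¹ * afEnergy Ω β v, ⟨fun x => (Real.sqrt c⁻¹ : ℂ) * v x, ?_, ?_, ?_⟩, ?_⟩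
      · exact MemH10_const_mul Ω v (inv_pos.2 hc) hv
      · show (∫ x in Ω, ‖(Real.sqrt c⁻¹ : ℂ) * v x‖ ^ 2) = M
        rw [mass_const_mul Ω v (inv_pos.2 hc)]
        show c⁻¹ * mass Ω v = M
        rw [hm, ← mul_assoc, inv_mul_cancel₀ hc.ne', one_mul]
      · rw [afEnergy_const_mul Ω (β * c) v (inv_pos.2 hc), mul_assoc,
          mul_inv_cancel₀ hc.ne', mul_one]
      · show c * (c⁻¹ * afEnergy Ω β v) = afEnergy Ω β v
        rw [← mul_assoc, mul_inv_cancel₀ hc.ne', one_mul]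
    · rintro ⟨e', ⟨u, hu, hm, rfl⟩, rfl⟩
      refine ⟨fun x => (Real.sqrt c : ℂ) * u x, MemH10_const_mul Ω u hc hu, ?_, ?_⟩
      · show (∫ x in Ω, ‖(Real.sqrt c : ℂ) * u x‖ ^ 2) = c * M
        rw [mass_const_mul Ω u hc]
        show c * mass Ω u = c * M
        rw [hm]
      · show c • afEnergy Ω (β * c) u = afEnergy Ω β (fun x => (Real.sqrt c : ℂ) * u x)
        rw [afEnergy_const_mul Ω β u hc, smul_eq_mul]
  rw [dirichletE, dirichletE, hset, Real.sInf_smul_of_nonneg hc.le, smul_eq_mul]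

lemma dirichletE_domain_scale (Ω : Set E2) (β M : ℝ) {L : ℝ} (hL : 0 < L) :
    dirichletE (L • Ω) β (L ^ 2 * M) = dirichletE Ω (β * L ^ 2) M := by
  have hL2 : β * L ^ 2 * (L⁻¹) ^ 2 = β := by
    field_simp
  have hset : {e | ∃ u, MemH10 (L • Ω) u ∧ mass (L • Ω) u = L ^ 2 * M ∧ e = afEnergy (L • Ω) β u}
      = {e | ∃ u, MemH10 Ω u ∧ mass Ω u = M ∧ e = afEnergy Ω (β * L ^ 2) u} := by
    ext e
    constructor
    · rintro ⟨w, hw, hm, rfl⟩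
      refine ⟨fun x => w ((L⁻¹)⁻¹ • x), ?_, ?_, ?_⟩
      · have := MemH10_comp_smul (L • Ω) w (inv_pos.2 hL) hw
        rwa [inv_smul_smul₀ hL.ne' Ω] at this
      · show (∫ x in Ω, ‖w ((L⁻¹)⁻¹ • x)‖ ^ 2) = M
        have := mass_comp_smul (L • Ω) w (inv_pos.2 hL)
        rw [inv_smul_smul₀ hL.ne' Ω] at this
        rw [this]
        show (L⁻¹) ^ 2 * mass (L • Ω) w = M
        rw [hm, ← mul_assoc, inv_pow, inv_mul_cancel₀ (pow_pos hL 2).ne', one_mul]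
      · have := afEnergy_comp_smul (L • Ω) (β * L ^ 2) w (inv_pos.2 hL)
        rw [inv_smul_smul₀ hL.ne' Ω, hL2] at this
        rw [this]
    · rintro ⟨u, hu, hm, rfl⟩
      refine ⟨fun x => u (L⁻¹ • x), MemH10_comp_smul Ω u hL hu, ?_, ?_⟩
      · show (∫ x in L • Ω, ‖u (L⁻¹ • x)‖ ^ 2) = L ^ 2 * M
        rw [mass_comp_smul Ω u hL]
        show L ^ 2 * mass Ω u = L ^ 2 * M
        rw [hm]
      · rw [afEnergy_comp_smul Ω β u hL]
  rw [dirichletE, dirichletE, hset]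

lemma liminf_const_mul_atTop (f : ℝ → ℝ) {a : ℝ} (ha : 0 < a) :
    Filter.liminf (fun L => a * f L) atTop = a * Filter.liminf f atTop := by
  rw [Filter.liminf_eq, Filter.liminf_eq]
  have hset : {b | ∀ᶠ L in atTop, b ≤ a * f L} = a • {b | ∀ᶠ L in atTop, b ≤ f L} := by
    ext b
    rw [Set.mem_smul_set_iff_inv_smul_mem₀ ha.ne']
    simp only [smul_eq_mul, Set.mem_setOf_eq]
    constructor
    · intro h
      refine h.mono fun L hL => ?_
      rw [inv_mul_le_iff₀ ha]
      exact hL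
    · intro h
      refine h.mono fun L hL => ?_
      rw [inv_mul_le_iff₀ ha] at hL
      exact hL
  rw [hset, Real.sSup_smul_of_nonneg ha.le, smul_eq_mul]

lemma map_sq_mul_atTop {a : ℝ} (ha : 0 < a) :
    Filter.map (fun L : ℝ => L ^ 2 * a) atTop = atTop := by
  have htend : Tendsto (fun L : ℝ => L ^ 2 * a) atTop atTop :=
    (tendsto_pow_atTop two_ne_zero).atTop_mul_const ha
  refine le_antisymm htend ?_
  have hsq : Tendsto Real.sqrt atTop atTop := by
    refine Filter.tendsto_atTop.2 fun b => ?_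
    filter_upwards [Filter.eventually_ge_atTop ((max b 0) ^ 2)] with x hx
    calc b ≤ max b 0 := le_max_left _ _
      _ = Real.sqrt ((max b 0) ^ 2) := (Real.sqrt_sq (le_max_right _ _)).symm
      _ ≤ Real.sqrt x := Real.sqrt_le_sqrt hx
  have htend' : Tendsto (fun b : ℝ => Real.sqrt (b / a)) atTop atTop :=
    hsq.comp (tendsto_id.atTop_div_const ha)
  have hev : ((fun L : ℝ => L ^ 2 * a) ∘ fun b : ℝ => Real.sqrt (b / a)) =ᶠ[atTop] id := by
    filter_upwards [Filter.eventually_ge_atTop (0 : ℝ)] with b hb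
    simp only [Function.comp_apply, id_eq]
    rw [Real.sq_sqrt (div_nonneg hb ha.le), div_mul_cancel₀ _ ha.ne']
  calc atTop = Filter.map ((fun L : ℝ => L ^ 2 * a) ∘ fun b : ℝ => Real.sqrt (b / a)) atTop := by
        rw [Filter.map_congr hev, Filter.map_id]
    _ = Filter.map (fun L : ℝ => L ^ 2 * a) (Filter.map (fun b : ℝ => Real.sqrt (b / a)) atTop) :=
        (Filter.map_map).symm
    _ ≤ Filter.map (fun L : ℝ => L ^ 2 * a) atTop := Filter.map_mono htend'

lemma liminf_comp_sq_mul (f : ℝ → ℝ) {a : ℝ} (ha : 0 < a) :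
    Filter.liminf (fun L : ℝ => f (L ^ 2 * a)) atTop = Filter.liminf f atTop := by
  have : Filter.liminf (fun L : ℝ => f (L ^ 2 * a)) atTop
      = Filter.liminf f (Filter.map (fun L : ℝ => L ^ 2 * a) atTop) := by
    rw [Filter.liminf_eq, Filter.liminf_eq]
    congr 1
  rw [this, map_sq_mul_atTop ha]

/-- **Equivalence of the large-volume and large-`β` limits.**
For any bounded domain `Ω ⊂ ℝ²` and any `ρ ≥ 0`, the thermodynamic energy per unit area at
unit statistics parameter, `e(1,ρ) := liminf_{L→∞} E₀(LΩ,1,ρL²|Ω|)/(L²|Ω|)`, satisfies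
`e(1,ρ) = |Ω| · liminf_{β→∞} E₀(Ω,β,ρ)/β`. -/
theorem thermo_limit_eq_large_beta (Ω : Set E2) (hΩ : IsOpen Ω) (hne : Ω.Nonempty)
    (hbd : Bornology.IsBounded Ω) (ρ : ℝ) (hρ : 0 ≤ ρ) :
    Filter.liminf
        (fun L : ℝ =>
          dirichletE (L • Ω) 1 (ρ * L ^ 2 * (volume Ω).toReal) / (L ^ 2 * (volume Ω).toReal))
        atTop
      = (volume Ω).toReal * Filter.liminf (fun β : ℝ => dirichletE Ω β ρ / β) atTop := by
  set a : ℝ := (volume Ω).toReal with ha_def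
  have ha : 0 < a := ENNReal.toReal_pos (hΩ.measure_pos volume hne).ne' hbd.measure_lt_top.ne
  set f : ℝ → ℝ := fun β => dirichletE Ω β ρ / β with hf_def
  have hev : (fun L : ℝ =>
      dirichletE (L • Ω) 1 (ρ * L ^ 2 * a) / (L ^ 2 * a))
      =ᶠ[atTop] fun L : ℝ => a * f (L ^ 2 * a) := by
    filter_upwards [Filter.eventually_gt_atTop (0 : ℝ)] with L hL
    have h1 : ρ * L ^ 2 * a = L ^ 2 * (ρ * a) := by ring
    have h2 : dirichletE (L • Ω) 1 (L ^ 2 * (ρ * a)) = dirichletE Ω (L ^ 2) (ρ * a) := by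
      rw [dirichletE_domain_scale Ω 1 (ρ * a) hL, one_mul]
    have h3 : dirichletE Ω (L ^ 2) (ρ * a) = a * dirichletE Ω (L ^ 2 * a) ρ := by
      rw [show ρ * a = a * ρ by ring, dirichletE_mass_scale Ω (L ^ 2) ρ ha]
    rw [h1, h2, h3, hf_def]
    simp only
    rw [mul_div_assoc]
  rw [Filter.liminf_congr hev,
    liminf_const_mul_atTop (fun L : ℝ => f (L ^ 2 * a)) ha, liminf_comp_sq_mul f ha]
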